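/- Suppose a and b are coprime integers with a odd and a ≠ 0, ±1 such that b mod a ∉ {1, -1, 2, -2} (as residues). Then the gcd of {φ(a·x + b) : x ∈ ℤ} equals 2. -/

import Mathlib

/-- `g` is the greatest common divisor of the set `S` of naturals:
it divides every element, and every common divisor divides it. -/
def IsGcdOfSet (S : Set ℕ) (g : ℕ) : Prop :=
  (∀ n ∈ S, g ∣ n) ∧ ∀ d : ℕ, (∀ n ∈ S, d ∣ n) → d ∣ g

lemma my_crt {m n : ℤ} (h : IsCoprime m n) (r s : ℤ) :
    ∃ c : ℤ, m ∣ c - r ∧ n ∣ c - s := by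
  obtain ⟨u, v, huv⟩ := h
  exact ⟨s*(u*m) + r*(v*n),
    ⟨(s-r)*u, by linear_combination r * huv⟩,
    ⟨(r-s)*v, by linear_combination s * huv⟩⟩

lemma my_coprime_of_dvd_sub {c r m : ℤ} (h : IsCoprime r m) (hd : m ∣ c - r) :
    IsCoprime c m := by
  obtain ⟨k, hk⟩ := hd
  have : c = r + m * k := by linarith
  rw [this]
  exact h.add_mul_left_left k

lemma my_exists_prime (N : ℕ) (hN : N ≠ 0) (c : ℤ) (hc : IsCoprime c (N:ℤ)) (M : ℕ) :
    ∃ q : ℕ, q.Prime ∧ M < q ∧ (N:ℤ) ∣ (q:ℤ) - c := by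
  haveI : NeZero N := ⟨hN⟩
  have hu : IsUnit ((c : ZMod N)) := by
    obtain ⟨u, v, huv⟩ := hc
    have h1 : ((u : ZMod N)) * ((c : ZMod N)) = 1 := by
      have := congrArg (Int.cast : ℤ → ZMod N) huv
      push_cast at this
      simpa [ZMod.natCast_self] using this
    exact IsUnit.of_mul_eq_one _ (by rw [mul_comm]; exact h1)
  obtain ⟨q, hq, hq1, hq2⟩ := Nat.forall_exists_prime_gt_and_eq_mod hu M
  refine ⟨q, hq1, hq, ?_⟩
  have h2 : ((q:ℤ) : ZMod N) = (c : ZMod N) := by push_cast; exact hq2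
  have := (ZMod.intCast_eq_intCast_iff _ _ _).mp h2
  exact dvd_sub_comm.mp (Int.ModEq.dvd this)

theorem stmt6 (a b : ℤ) (hab : IsCoprime a b) (haodd : Odd a)
    (ha0 : a ≠ 0) (ha1 : a ≠ 1) (ham1 : a ≠ -1)
    (hb1 : ¬ a ∣ b - 1) (hbm1 : ¬ a ∣ b + 1) (hb2 : ¬ a ∣ b - 2) (hbm2 : ¬ a ∣ b + 2)
    (g : ℕ)
    (hg : IsGcdOfSet {n : ℕ | ∃ x : ℤ, n = Nat.totient (a * x + b).natAbs} g) :
    g = 2 := by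
  obtain ⟨hg1, hg2⟩ := hg
  set m := a.natAbs with hmdef
  have hmodd : Odd m := Int.natAbs_odd.mpr haodd
  have hm0 : m ≠ 0 := fun h => ha0 (Int.natAbs_eq_zero.mp h)
  have hm1' : m ≠ 1 := by
    intro h
    rcases Int.natAbs_eq_iff.mp h with h | h
    · exact ha1 (by simpa using h)
    · exact ham1 (by simpa using h)
  have hm2 : m ≠ 2 := by
    intro h
    rw [h] at hmodd
    simp [Nat.odd_iff] at hmodd
  have hm3 : 3 ≤ m := by omega
  have hcop : IsCoprime ((m:ℤ)) b := by
    rcases Int.natAbs_eq a with h | h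
    · rw [← h]; exact hab
    · have : ((m:ℤ)) = -a := by omega
      rw [this]; exact hab.neg_left
  have hmemS : ∀ n : ℕ, (m:ℤ) ∣ (n:ℤ) - b →
      n.totient ∈ {n : ℕ | ∃ x : ℤ, n = Nat.totient (a * x + b).natAbs} := by
    intro n hd
    have hd' : a ∣ (n:ℤ) - b := Int.natAbs_dvd.mp hd
    refine ⟨((n:ℤ) - b)/a, ?_⟩
    rw [Int.mul_ediv_cancel' hd']
    simp
  -- Step 1: 2 divides g
  have h2g : 2 ∣ g := by
    apply hg2
    rintro n ⟨x, rfl⟩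
    have hax : a ∣ (a*x+b) - b := ⟨x, by ring⟩
    have h3 : 2 < (a*x+b).natAbs := by
      by_contra h
      push_neg at h
      have ht : a*x+b = -2 ∨ a*x+b = -1 ∨ a*x+b = 0 ∨ a*x+b = 1 ∨ a*x+b = 2 := by omega
      rcases ht with h | h | h | h | h
      · apply hbm2; rw [h] at hax
        have h2 : b + 2 = -(-2 - b) := by ring
        rw [h2]; exact hax.neg_right
      · apply hbm1; rw [h] at hax
        have h2 : b + 1 = -(-1 - b) := by ring
        rw [h2]; exact hax.neg_right
      · have hb : a ∣ b := by
          rw [h] at hax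
          have h2 : b = -(0 - b) := by ring
          rw [h2]; exact hax.neg_right
        have : IsUnit a := hab.isUnit_of_dvd' dvd_rfl hb
        rcases Int.isUnit_iff.mp this with h | h
        · exact ha1 h
        · exact ham1 h
      · apply hb1; rw [h] at hax
        have h2 : b - 1 = -(1 - b) := by ring
        rw [h2]; exact hax.neg_right
      · apply hb2; rw [h] at hax
        have h2 : b - 2 = -(2 - b) := by ring
        rw [h2]; exact hax.neg_right
    exact (Nat.totient_even h3).two_dvd
  -- Step 2: a prime p0 ≡ b (mod m), p0 ≡ 3 (mod 4)
  have hc4 : IsCoprime ((m:ℤ)) (4:ℤ) := by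
    have h2 : Nat.Coprime m 4 := by
      have h := Nat.coprime_two_right.mpr hmodd
      simpa using h.pow_right 2
    have := Nat.isCoprime_iff_coprime.mpr h2
    exact_mod_cast this
  obtain ⟨c, hcm, hc4'⟩ := my_crt hc4 b 3
  have hccm : IsCoprime c ((m:ℤ)) := my_coprime_of_dvd_sub hcop.symm hcm
  have hcc4 : IsCoprime c (4:ℤ) := by
    refine my_coprime_of_dvd_sub ?_ hc4'
    have : Nat.Coprime 3 4 := by decide
    have := Nat.isCoprime_iff_coprime.mpr this
    exact_mod_cast this
  have hccN : IsCoprime c (((4*m:ℕ)):ℤ) := by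
    push_cast
    exact hcc4.mul_right hccm
  obtain ⟨p0, hp0p, hp0gt, hp0d⟩ := my_exists_prime (4*m) (by omega) c hccN 4
  have hp0d' : 4*(m:ℤ) ∣ (p0:ℤ) - c := by push_cast at hp0d; convert hp0d using 2
  have hm_p0 : (m:ℤ) ∣ (p0:ℤ) - b := by
    have h1 : (m:ℤ) ∣ (p0:ℤ) - c := dvd_trans (dvd_mul_left (m:ℤ) 4) hp0d'
    have := dvd_add h1 hcm
    rwa [sub_add_sub_cancel] at this
  have h4_p0 : (4:ℤ) ∣ (p0:ℤ) - 3 := by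
    have h1 : (4:ℤ) ∣ (p0:ℤ) - c := dvd_trans (dvd_mul_right (4:ℤ) (m:ℤ)) hp0d'
    have := dvd_add h1 hc4'
    rwa [sub_add_sub_cancel] at this
  have hgp0 : g ∣ p0 - 1 := by
    have := hg1 _ (hmemS p0 hm_p0)
    rwa [Nat.totient_prime hp0p] at this
  have hgZ : (g:ℤ) ∣ (p0:ℤ) - 1 := by
    have := Int.natCast_dvd_natCast.mpr hgp0
    rwa [Nat.cast_sub hp0p.one_le, Nat.cast_one] at this
  -- Step 3: no odd prime divides g
  have key : ∀ p : ℕ, p.Prime → p ≠ 2 → ¬ p ∣ g := by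
    intro p hp hp2 hpg
    have hp0' : (p:ℤ) ∣ (p0:ℤ) - 1 := dvd_trans (Int.natCast_dvd_natCast.mpr hpg) hgZ
    obtain ⟨q1, q2, hq1p, hq2p, hlt, hq1m, hq2m, hq1P, hq2P⟩ :
        ∃ q1 q2 : ℕ, q1.Prime ∧ q2.Prime ∧ q1 < q2 ∧
          (m:ℤ) ∣ (q1:ℤ) + 1 ∧ (m:ℤ) ∣ (q2:ℤ) + b ∧
          (p:ℤ) ∣ (q1:ℤ) + 1 ∧ (p:ℤ) ∣ (q2:ℤ) + 1 := by
      by_cases hpm : p ∣ m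
      · have hpmZ : (p:ℤ) ∣ (m:ℤ) := Int.natCast_dvd_natCast.mpr hpm
        have hb1p : (p:ℤ) ∣ b - 1 := by
          have h1 : (p:ℤ) ∣ (p0:ℤ) - b := dvd_trans hpmZ hm_p0
          have := dvd_sub hp0' h1
          have heq : ((p0:ℤ) - 1) - ((p0:ℤ) - b) = b - 1 := by ring
          rwa [heq] at this
        obtain ⟨q1, hq1p, hq1gt, hq1d⟩ := my_exists_prime m hm0 (-1)
          (isCoprime_one_left.neg_left) 2
        obtain ⟨q2, hq2p, hq2gt, hq2d⟩ := my_exists_prime m hm0 (-b)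
          (hcop.symm.neg_left) q1
        rw [sub_neg_eq_add] at hq1d
        have hq2b : (m:ℤ) ∣ (q2:ℤ) + b := by rwa [sub_neg_eq_add] at hq2d
        refine ⟨q1, q2, hq1p, hq2p, hq2gt, hq1d, hq2b, dvd_trans hpmZ hq1d, ?_⟩
        have h1 : (p:ℤ) ∣ (q2:ℤ) + b := dvd_trans hpmZ hq2b
        have := dvd_sub h1 hb1p
        have heq : ((q2:ℤ) + b) - (b - 1) = (q2:ℤ) + 1 := by ring
        rwa [heq] at this
      · have hmp : IsCoprime ((m:ℤ)) ((p:ℤ)) := by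
          have h2 : Nat.Coprime m p := (Nat.Prime.coprime_iff_not_dvd hp).mpr hpm |>.symm
          have := Nat.isCoprime_iff_coprime.mpr h2
          exact_mod_cast this
        obtain ⟨c2, hc2m, hc2p⟩ := my_crt hmp (-b) (-1)
        have hc2cop : IsCoprime c2 (((m*p:ℕ)):ℤ) := by
          push_cast
          exact (my_coprime_of_dvd_sub (hcop.symm.neg_left) hc2m).mul_right
            (my_coprime_of_dvd_sub (isCoprime_one_left.neg_left) hc2p)
        have hc1cop : IsCoprime (-1 : ℤ) (((m*p:ℕ)):ℤ) := isCoprime_one_left.neg_left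
        have hNmp : m * p ≠ 0 := Nat.mul_ne_zero hm0 hp.pos.ne'
        obtain ⟨q1, hq1p, hq1gt, hq1d⟩ := my_exists_prime (m*p) hNmp (-1) hc1cop 2
        obtain ⟨q2, hq2p, hq2gt, hq2d⟩ := my_exists_prime (m*p) hNmp c2 hc2cop q1
        rw [sub_neg_eq_add] at hq1d
        have hq1d' : (m:ℤ)*(p:ℤ) ∣ (q1:ℤ) + 1 := by push_cast at hq1d; convert hq1d using 2
        have hq2d' : (m:ℤ)*(p:ℤ) ∣ (q2:ℤ) - c2 := by push_cast at hq2d; convert hq2d using 2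
        have hmq2 : (m:ℤ) ∣ (q2:ℤ) + b := by
          have h1 : (m:ℤ) ∣ (q2:ℤ) - c2 := dvd_trans (dvd_mul_right (m:ℤ) (p:ℤ)) hq2d'
          have := dvd_add h1 hc2m
          have heq : ((q2:ℤ) - c2) + (c2 - (-b)) = (q2:ℤ) + b := by ring
          rwa [heq] at this
        have hpq2 : (p:ℤ) ∣ (q2:ℤ) + 1 := by
          have h1 : (p:ℤ) ∣ (q2:ℤ) - c2 := dvd_trans (dvd_mul_left (p:ℤ) (m:ℤ)) hq2d'
          have := dvd_add h1 hc2p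
          have heq : ((q2:ℤ) - c2) + (c2 - (-1)) = (q2:ℤ) + 1 := by ring
          rwa [heq] at this
        exact ⟨q1, q2, hq1p, hq2p, hq2gt,
          dvd_trans (dvd_mul_right (m:ℤ) (p:ℤ)) hq1d', hmq2,
          dvd_trans (dvd_mul_left (p:ℤ) (m:ℤ)) hq1d', hpq2⟩
    -- shared endgame
    have hne : q1 ≠ q2 := Nat.ne_of_lt hlt
    have hcopq : Nat.Coprime q1 q2 := (Nat.coprime_primes hq1p hq2p).mpr hne
    have hprod : (m:ℤ) ∣ ((q1*q2 : ℕ):ℤ) - b := by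
      push_cast
      have heq : (q1:ℤ)*(q2:ℤ) - b = ((q1:ℤ)+1)*(q2:ℤ) - ((q2:ℤ)+b) := by ring
      rw [heq]
      exact dvd_sub (hq1m.mul_right _) hq2m
    have hgdvd : g ∣ (q1-1)*(q2-1) := by
      have := hg1 _ (hmemS (q1*q2) hprod)
      rwa [Nat.totient_mul hcopq, Nat.totient_prime hq1p, Nat.totient_prime hq2p] at this
    have hpdvd : (p:ℤ) ∣ ((q1:ℤ)-1)*((q2:ℤ)-1) := by
      have h1 := Int.natCast_dvd_natCast.mpr (dvd_trans hpg hgdvd)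
      push_cast [Nat.cast_sub hq1p.one_le, Nat.cast_sub hq2p.one_le] at h1
      exact_mod_cast h1
    have hp2' : ¬ ((p:ℤ) ∣ 2) := by
      intro h
      have hle : (p:ℤ) ≤ 2 := Int.le_of_dvd (by norm_num) h
      have := hp.two_le
      have : p = 2 := by omega
      exact hp2 this
    rcases (Nat.prime_iff_prime_int.mp hp).dvd_mul.mp hpdvd with h | h
    · apply hp2'
      have := dvd_sub hq1P h
      have heq : ((q1:ℤ)+1) - ((q1:ℤ)-1) = 2 := by ring
      rwa [heq] at this
    · apply hp2'
      have := dvd_sub hq2P h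
      have heq : ((q2:ℤ)+1) - ((q2:ℤ)-1) = 2 := by ring
      rwa [heq] at this
  -- Conclusion
  have h4g : ¬ (4 ∣ g) := by
    intro h
    have h4 : (4:ℤ) ∣ (g:ℤ) := by exact_mod_cast Int.natCast_dvd_natCast.mpr h
    have h4' : (4:ℤ) ∣ (p0:ℤ) - 1 := dvd_trans h4 hgZ
    omega
  have hg0 : g ≠ 0 := by
    intro h
    rw [h] at hgZ
    simp at hgZ
    omega
  by_contra hne2
  obtain ⟨k, hk⟩ := h2g
  have hk1 : k ≠ 1 := by omega
  have hrp := Nat.minFac_prime hk1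
  have hrg : k.minFac ∣ g := dvd_trans (Nat.minFac_dvd k) ⟨2, by omega⟩
  by_cases hr2 : k.minFac = 2
  · apply h4g
    have h2k := Nat.minFac_dvd k
    rw [hr2] at h2k
    obtain ⟨j, hj⟩ := h2k
    exact ⟨j, by omega⟩
  · exact key _ hrp hr2 hrg
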